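/- The expected queue length restricted to subchain 1, L^1 = Σ_{k=0}^{n1} k·π^1_{s+k}, satisfies the exact identity L^1/π^1_s = (λ/θ1)·[ p·(1/π^1_s − 1) + 1 − r1 ], where p = 1 − s·μ/λ. (Formula for L^1 established in the proof of Proposition 2.) -/

import Mathlib

open Finset

/-- Departure rate of the two-stage reneging birth-death chain. -/
noncomputable def depRate (s n1 : ℕ) (μ θ1 θ2 : ℝ) (k : ℕ) : ℝ :=
  if k ≤ s then (k : ℝ) * μ
  else if k ≤ s + n1 then (s : ℝ) * μ + ((k : ℝ) - (s : ℝ)) * θ1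
  else (s : ℝ) * μ + (n1 : ℝ) * θ1 + ((k : ℝ) - (s : ℝ) - (n1 : ℝ)) * θ2

/-- Stationary probability of state `k` in the subchain with state set `A`. -/
noncomputable def subProb (π : ℕ → ℝ) (A : Finset ℕ) (k : ℕ) : ℝ :=
  π k / ∑ k' ∈ A, π k'

lemma sum_Icc_shift (f : ℕ → ℝ) (s : ℕ) : ∀ n : ℕ,
    ∑ k ∈ Finset.Icc s (s + n), f k = ∑ j ∈ Finset.range (n + 1), f (s + j) := by
  intro n
  induction n with
  | zero => simp
  | succ n ih =>
    rw [show s + (n + 1) = (s + n) + 1 from rfl, Finset.sum_Icc_succ_top (by omega), ih]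
    simp [Finset.sum_range_succ, add_assoc]

lemma aux_tel (lam c d : ℝ) : ∀ (n : ℕ) (a : ℕ → ℝ),
    (∀ j, 1 ≤ j → j ≤ n → a j * (c + (j : ℝ) * d) = a (j - 1) * lam) →
    d * ∑ j ∈ Finset.range (n + 1), (j : ℝ) * a j
      = lam * ((∑ j ∈ Finset.range (n + 1), a j) - a n)
        - c * ((∑ j ∈ Finset.range (n + 1), a j) - a 0) := by
  intro n
  induction n with
  | zero => intro a _; simp
  | succ n ih =>
    intro a h
    have h1 := ih a (fun j hj hj' => h j hj (by omega))
    have h2 := h (n + 1) (by omega) le_rfl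
    simp only [Nat.add_sub_cancel] at h2
    simp only [Finset.sum_range_succ] at h1 ⊢
    push_cast at h2 ⊢
    linear_combination h1 + h2

theorem stmt_13 (lam μ θ1 θ2 : ℝ) (hlam : 0 < lam) (hμ : 0 < μ)
    (hθ1 : 0 < θ1) (hθ2 : 0 < θ2) (s n1 n2 : ℕ) (hs : 1 ≤ s) (π : ℕ → ℝ)
    (hpos : ∀ k ∈ Finset.Icc 0 (s + n1 + n2), 0 < π k)
    (hbal : ∀ k, 1 ≤ k → k ≤ s + n1 + n2 →
      π k * depRate s n1 μ θ1 θ2 k = π (k - 1) * lam)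
    (hsum : ∑ k ∈ Finset.Icc 0 (s + n1 + n2), π k = 1) :
    (∑ k ∈ Finset.range (n1 + 1), (k : ℝ) * subProb π (Finset.Icc s (s + n1)) (s + k)) / (subProb π (Finset.Icc s (s + n1)) s) =
      lam / θ1 * ((1 - (s : ℝ) * μ / lam) * (1 / (subProb π (Finset.Icc s (s + n1)) s) - 1) + 1 - (subProb π (Finset.Icc s (s + n1)) (s + n1) / (subProb π (Finset.Icc s (s + n1)) s))) := by
  have hkey : ∀ j, 1 ≤ j → j ≤ n1 →
      π (s + j) * ((s : ℝ) * μ + (j : ℝ) * θ1) = π (s + j - 1) * lam := by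
    intro j hj hj'
    have hb := hbal (s + j) (by omega) (by omega)
    have hd : depRate s n1 μ θ1 θ2 (s + j) = (s : ℝ) * μ + (j : ℝ) * θ1 := by
      unfold depRate
      rw [if_neg (by omega), if_pos (by omega)]
      push_cast; ring
    rw [hd] at hb
    exact hb
  have haux := aux_tel lam ((s : ℝ) * μ) θ1 n1 (fun j => π (s + j))
    (fun j hj hj' => by
      have := hkey j hj hj'
      have he : s + j - 1 = s + (j - 1) := by omega
      rw [he] at this
      exact this)
  simp only [Nat.add_zero] at haux
  have hS : (∑ k' ∈ Finset.Icc s (s + n1), π k') = ∑ j ∈ Finset.range (n1 + 1), π (s + j) := by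
    exact sum_Icc_shift π s n1
  have hπs : 0 < π s := hpos s (by simp; omega)
  have hSpos : 0 < ∑ j ∈ Finset.range (n1 + 1), π (s + j) :=
    Finset.sum_pos (fun j hj => hpos (s + j) (by simp at hj ⊢; omega)) (by simp)
  unfold subProb
  rw [hS]
  set S := ∑ j ∈ Finset.range (n1 + 1), π (s + j) with hSdef
  have hsum2 : ∑ k ∈ Finset.range (n1 + 1), (k : ℝ) * (π (s + k) / S)
      = (∑ k ∈ Finset.range (n1 + 1), (k : ℝ) * π (s + k)) / S := by
    rw [Finset.sum_div]
    exact Finset.sum_congr rfl (fun k _ => by ring)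
  rw [hsum2]
  field_simp
  linear_combination haux
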